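/- arXiv:2001.11352 — 2 statements merged into one kernel-verified Lean document; each statement's English description precedes it below -/
import Mathlib

section
/- Let C be an abelian category and 𝒲 a class of objects of C closed under isomorphisms and finite direct sums. Let 0→X₁→X₀→X→0 be a Hom(𝒲,−)-exact short exact sequence in C, let (W₀ⁱ)_{i≥0} be the terms of a proper 𝒲-resolution of X₀ and (W₁ⁱ)_{i≥0} the terms of a proper 𝒲-resolution of X₁. Then: (1) X admits a proper 𝒲-resolution whose 0-th term is W₀⁰ and whose i-th term is W₀ⁱ ⊕ W₁^{i−1} for all i ≥ 1; (2) if the two given proper 𝒲-resolutions are Hom(−,𝒲)-exact and the short exact sequence 0→X₁→X₀→X→0 is Hom(−,𝒲)-exact, then this proper 𝒲-resolution of X can be chosen Hom(−,𝒲)-exact. -/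
open CategoryTheory Category Limits

universe v u

variable {C : Type u} [Category.{v} C] [Abelian C]

def SES {A B X : C} (f : A ⟶ B) (g : B ⟶ X) : Prop :=
  ∃ w : f ≫ g = 0, (CategoryTheory.ShortComplex.mk f g w).ShortExact

def CovExact (𝒲 : Set C) {A B X : C} (f : A ⟶ B) (g : B ⟶ X) : Prop :=
  ∀ W ∈ 𝒲,
    (Function.Injective fun u : W ⟶ A => u ≫ f) ∧
    (∀ v : W ⟶ B, v ≫ g = 0 → ∃ u : W ⟶ A, u ≫ f = v) ∧
    (Function.Surjective fun v : W ⟶ B => v ≫ g)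

def ContraExact (𝒲 : Set C) {A B X : C} (f : A ⟶ B) (g : B ⟶ X) : Prop :=
  ∀ W ∈ 𝒲,
    (Function.Injective fun u : X ⟶ W => g ≫ u) ∧
    (∀ v : B ⟶ W, f ≫ v = 0 → ∃ u : X ⟶ W, g ≫ u = v) ∧
    (Function.Surjective fun v : B ⟶ W => f ≫ v)

/-- A proper `𝒲`-resolution of `A` with terms `W i`: short exact sequences
`0 ⟶ K (i+1) ⟶ W i ⟶ K i ⟶ 0` with `K 0 = A`, each `W i ∈ 𝒲`, each `Hom(𝒲,-)`-exact. -/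
structure ProperResolution (𝒲 : Set C) (A : C) (W : ℕ → C) where
  K : ℕ → C
  hK : K 0 = A
  g : ∀ i, K (i + 1) ⟶ W i
  f : ∀ i, W i ⟶ K i
  mem : ∀ i, W i ∈ 𝒲
  ses : ∀ i, SES (g i) (f i)
  proper : ∀ i, CovExact 𝒲 (g i) (f i)

/-- The proper resolution is in addition `Hom(-,𝒲)`-exact. -/
def ProperResolution.IsContraExact {𝒲 : Set C} {A : C} {W : ℕ → C}
    (R : ProperResolution 𝒲 A W) : Prop :=
  ∀ i, ContraExact 𝒲 (R.g i) (R.f i)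

/-- A coproper `𝒲`-coresolution of `A` with terms `W i`: short exact sequences
`0 ⟶ K i ⟶ W i ⟶ K (i+1) ⟶ 0` with `K 0 = A`, each `W i ∈ 𝒲`, each `Hom(-,𝒲)`-exact. -/
structure CoproperCoresolution (𝒲 : Set C) (A : C) (W : ℕ → C) where
  K : ℕ → C
  hK : K 0 = A
  g : ∀ i, K i ⟶ W i
  f : ∀ i, W i ⟶ K (i + 1)
  mem : ∀ i, W i ∈ 𝒲
  ses : ∀ i, SES (g i) (f i)
  coproper : ∀ i, ContraExact 𝒲 (g i) (f i)

/-- The coproper coresolution is in addition `Hom(𝒲,-)`-exact. -/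
def CoproperCoresolution.IsCovExact {𝒲 : Set C} {A : C} {W : ℕ → C}
    (R : CoproperCoresolution 𝒲 A W) : Prop :=
  ∀ i, CovExact 𝒲 (R.g i) (R.f i)

/-- Membership in the Gorenstein category `G(𝒲)`: `X` admits both a proper `𝒲`-resolution
which is `Hom(-,𝒲)`-exact and a coproper `𝒲`-coresolution which is `Hom(𝒲,-)`-exact
(i.e. a complete `𝒲`-resolution). -/
def MemGW (𝒲 : Set C) (X : C) : Prop :=
  (∃ (W : ℕ → C) (R : ProperResolution 𝒲 X W), R.IsContraExact) ∧
  (∃ (W : ℕ → C) (R : CoproperCoresolution 𝒲 X W), R.IsCovExact)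

section Stmt10Aux

variable {𝒲 : Set C}

lemma SES.w {A B X : C} {f : A ⟶ B} {g : B ⟶ X} (h : SES f g) : f ≫ g = 0 := h.choose

lemma SES.shortExact {A B X : C} {f : A ⟶ B} {g : B ⟶ X} (h : SES f g) :
    (ShortComplex.mk f g h.w).ShortExact := h.choose_spec

lemma SES.mono {A B X : C} {f : A ⟶ B} {g : B ⟶ X} (h : SES f g) : Mono f :=
  h.shortExact.mono_f

lemma SES.epi {A B X : C} {f : A ⟶ B} {g : B ⟶ X} (h : SES f g) : Epi g :=
  h.shortExact.epi_g

lemma SES.liftKer {A B X : C} {f : A ⟶ B} {g : B ⟶ X} (h : SES f g)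
    {T : C} (v : T ⟶ B) (hv : v ≫ g = 0) : ∃ u : T ⟶ A, u ≫ f = v := by
  haveI : Mono (ShortComplex.mk f g h.w).f := h.mono
  exact ⟨h.shortExact.exact.lift v hv, h.shortExact.exact.lift_f v hv⟩

lemma SES.descCoker {A B X : C} {f : A ⟶ B} {g : B ⟶ X} (h : SES f g)
    {T : C} (v : B ⟶ T) (hv : f ≫ v = 0) : ∃ u : X ⟶ T, g ≫ u = v := by
  haveI : Epi (ShortComplex.mk f g h.w).g := h.epi
  exact ⟨h.shortExact.exact.desc v hv, h.shortExact.exact.g_desc v hv⟩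

lemma SES.make {A B X : C} {f : A ⟶ B} {g : B ⟶ X} (w : f ≫ g = 0)
    (hm : Mono f) (he : Epi g)
    (hlift : ∀ {T : C} (v : T ⟶ B), v ≫ g = 0 → ∃ u : T ⟶ A, u ≫ f = v) : SES f g := by
  haveI := hm
  refine ⟨w, ShortComplex.ShortExact.mk' ?_ hm he⟩
  exact ShortComplex.exact_of_f_is_kernel _
    (KernelFork.IsLimit.ofι f w (fun v hv => (hlift v hv).choose)
      (fun v hv => (hlift v hv).choose_spec)
      (fun v hv m hm' => by rw [← cancel_mono f, hm', (hlift v hv).choose_spec]))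

lemma covOfSES {A B X : C} {f : A ⟶ B} {g : B ⟶ X} (h : SES f g)
    (hs : ∀ W ∈ 𝒲, ∀ v : W ⟶ X, ∃ u : W ⟶ B, u ≫ g = v) : CovExact 𝒲 f g := by
  intro W hW
  haveI := h.mono
  exact ⟨fun u₁ u₂ h12 => (cancel_mono f).mp h12,
    fun v hv => h.liftKer v hv, fun v => hs W hW v⟩

lemma contraOfSES {A B X : C} {f : A ⟶ B} {g : B ⟶ X} (h : SES f g)
    (hs : ∀ W ∈ 𝒲, ∀ v : A ⟶ W, ∃ u : B ⟶ W, f ≫ u = v) : ContraExact 𝒲 f g := by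
  intro W hW
  haveI := h.epi
  exact ⟨fun u₁ u₂ h12 => (cancel_epi g).mp h12,
    fun v hv => h.descCoker v hv, fun v => hs W hW v⟩

end Stmt10Aux
section Stmt10Constr

variable (𝒲 : Set C)

/-- One layer of the horseshoe tower. -/
structure St (A Cc : C) where
  B : C
  a : A ⟶ B
  b : B ⟶ Cc
  ses : SES a b
  cov : CovExact 𝒲 a b

/-- Output of one horseshoe step. -/
structure StepOut {A Cc A' C' P Q : C}
    (gA : A' ⟶ P) (fA : P ⟶ A) (gC : C' ⟶ Q) (fC : Q ⟶ Cc) (s : St 𝒲 A Cc) where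
  next : St 𝒲 A' C'
  k : next.B ⟶ P ⊞ Q
  e : P ⊞ Q ⟶ s.B
  ses : SES k e
  cov : CovExact 𝒲 k e
  contra : ContraExact 𝒲 gA fA → ContraExact 𝒲 gC fC → ContraExact 𝒲 k e

variable {𝒲}

noncomputable def step {A Cc A' C' P Q : C}
    (gA : A' ⟶ P) (fA : P ⟶ A) (gC : C' ⟶ Q) (fC : Q ⟶ Cc)
    (sesA : SES gA fA) (covA : CovExact 𝒲 gA fA)
    (sesC : SES gC fC) (covC : CovExact 𝒲 gC fC)
    (hQ : Q ∈ 𝒲) (s : St 𝒲 A Cc) :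
    StepOut 𝒲 gA fA gC fC s := by
  classical
  -- a lift of fC along s.b
  have ht0 := (s.cov Q hQ).2.2 fC
  set t : Q ⟶ s.B := ht0.choose with ht_def
  have ht : t ≫ s.b = fC := ht0.choose_spec
  set e : P ⊞ Q ⟶ s.B := biprod.desc (fA ≫ s.a) t with he_def
  have he1 : biprod.inl ≫ e = fA ≫ s.a := biprod.inl_desc _ _
  have he2 : biprod.inr ≫ e = t := biprod.inr_desc _ _
  have heb : e ≫ s.b = biprod.snd ≫ fC := by
    apply biprod.hom_ext'
    · rw [← assoc, he1, assoc, s.ses.w, comp_zero, ← assoc, biprod.inl_snd, zero_comp]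
    · rw [← assoc, he2, ht, ← assoc, biprod.inr_snd, id_comp]
  haveI hepi_e : Epi e := by
    rw [Preadditive.epi_iff_cancel_zero]
    intro R z hz
    have h1 : s.a ≫ z = 0 := by
      haveI := sesA.epi
      have h' : (fA ≫ s.a) ≫ z = 0 := by rw [← he1, assoc, hz, comp_zero]
      rw [← cancel_epi fA, comp_zero, ← assoc]; exact h'
    obtain ⟨z', hz'⟩ := s.ses.descCoker z h1
    have h2 : fC ≫ z' = 0 := by
      rw [← ht, assoc, hz', ← he2, assoc, hz, comp_zero]
    haveI := sesC.epi
    have h3 : z' = 0 := by rw [← cancel_epi fC, comp_zero]; exact h2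
    rw [← hz', h3, comp_zero]
  set k : kernel e ⟶ P ⊞ Q := kernel.ι e with hk_def
  have hke : k ≫ e = 0 := kernel.condition e
  have sesKE : SES k e :=
    ⟨hke, ShortComplex.ShortExact.mk'
      (ShortComplex.exact_of_f_is_kernel _ (kernelIsKernel e)) inferInstance hepi_e⟩
  have ha'0 : (gA ≫ biprod.inl) ≫ e = 0 := by
    rw [assoc, he1, ← assoc, sesA.w, zero_comp]
  set a' : A' ⟶ kernel e := kernel.lift e (gA ≫ biprod.inl) ha'0 with ha'_def
  have ha' : a' ≫ k = gA ≫ biprod.inl := kernel.lift_ι _ _ _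
  have hks : (k ≫ biprod.snd) ≫ fC = 0 := by
    rw [assoc, ← heb, ← assoc, hke, zero_comp]
  have hb'0 := sesC.liftKer (k ≫ biprod.snd) hks
  set b' : kernel e ⟶ C' := hb'0.choose with hb'_def
  have hb' : b' ≫ gC = k ≫ biprod.snd := hb'0.choose_spec
  haveI hmk : Mono k := by rw [hk_def]; infer_instance
  haveI := sesA.mono   -- Mono gA
  haveI := sesC.mono   -- Mono gC
  haveI := sesA.epi    -- Epi fA
  haveI := sesC.epi    -- Epi fC
  haveI := s.ses.mono  -- Mono s.a
  haveI := s.ses.epi   -- Epi s.b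
  have hmono_a' : Mono a' := by
    haveI : Mono (a' ≫ k) := by rw [ha']; exact mono_comp _ _
    exact mono_of_mono a' k
  have wa'b' : a' ≫ b' = 0 := by
    rw [← cancel_mono gC, assoc, hb', zero_comp, ← assoc, ha', assoc, biprod.inl_snd, comp_zero]
  have hepi_b' : Epi b' := by
    rw [epi_iff_surjective_up_to_refinements]
    intro T z
    have h1 : (z ≫ gC ≫ t) ≫ s.b = 0 := by
      simp only [assoc, ht]
      rw [sesC.w, comp_zero]
    obtain ⟨T₁, π₁, hπ₁, r, hr⟩ :=
      s.ses.shortExact.exact.exact_up_to_refinements (z ≫ gC ≫ t) h1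
    obtain ⟨T₂, π₂, hπ₂, p, hp⟩ := surjective_up_to_refinements_of_epi fA r
    have key : (π₂ ≫ π₁ ≫ z ≫ gC) ≫ t = p ≫ fA ≫ s.a := by
      calc (π₂ ≫ π₁ ≫ z ≫ gC) ≫ t = π₂ ≫ (π₁ ≫ (z ≫ gC ≫ t)) := by simp only [assoc]
      _ = π₂ ≫ (r ≫ s.a) := by rw [hr]
      _ = (π₂ ≫ r) ≫ s.a := by rw [assoc]
      _ = p ≫ fA ≫ s.a := by rw [hp, assoc]
    have hm : (biprod.lift (-p) (π₂ ≫ π₁ ≫ z ≫ gC)) ≫ e = 0 := by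
      rw [he_def, biprod.lift_desc, key, Preadditive.neg_comp, neg_add_cancel]
    refine ⟨T₂, π₂ ≫ π₁, epi_comp _ _, kernel.lift e _ hm, ?_⟩
    rw [← cancel_mono gC, assoc, assoc, assoc, hb', ← assoc (kernel.lift e _ hm), hk_def]
    rw [kernel.lift_ι, biprod.lift_snd]
  have lift_aux : ∀ {T : C} (v : T ⟶ kernel e), v ≫ b' = 0 → ∃ u : T ⟶ A', u ≫ a' = v := by
    intro T v hv
    have h1 : v ≫ k ≫ biprod.snd = 0 := by
      rw [← hb', ← assoc, hv, zero_comp]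
    have h2 : v ≫ k = (v ≫ k ≫ biprod.fst) ≫ biprod.inl := by
      apply biprod.hom_ext
      · simp only [assoc, biprod.inl_fst, comp_id]
      · simp only [assoc, biprod.inl_snd, comp_zero]
        exact h1
    have h3 : ((v ≫ k ≫ biprod.fst) ≫ fA) ≫ s.a = 0 := by
      calc ((v ≫ k ≫ biprod.fst) ≫ fA) ≫ s.a
          = (v ≫ k ≫ biprod.fst) ≫ biprod.inl ≫ e := by rw [assoc, he1]
        _ = (v ≫ k) ≫ e := by rw [← assoc, ← h2]
        _ = 0 := by rw [assoc, hke, comp_zero]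
    have h4 : (v ≫ k ≫ biprod.fst) ≫ fA = 0 := by
      rw [← cancel_mono s.a, zero_comp]; exact h3
    obtain ⟨u, hu⟩ := sesA.liftKer (v ≫ k ≫ biprod.fst) h4
    refine ⟨u, ?_⟩
    rw [← cancel_mono k, assoc, ha', ← assoc, hu, ← h2]
  have sesNext : SES a' b' := SES.make wa'b' hmono_a' hepi_b' lift_aux
  have covNext : CovExact 𝒲 a' b' := by
    apply covOfSES sesNext
    intro W hW v
    have h1 : (v ≫ gC ≫ t) ≫ s.b = 0 := by
      simp only [assoc, ht]
      rw [sesC.w, comp_zero]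
    obtain ⟨r, hrr⟩ := s.ses.liftKer (v ≫ gC ≫ t) h1
    obtain ⟨pr, hpr⟩ := (covA W hW).2.2 (-r)
    have hpr' : pr ≫ fA = -r := hpr
    have hm : (biprod.lift pr (v ≫ gC)) ≫ e = 0 := by
      rw [he_def, biprod.lift_desc, ← assoc, hpr', Preadditive.neg_comp, hrr, assoc,
        neg_add_cancel]
    refine ⟨kernel.lift e _ hm, ?_⟩
    rw [← cancel_mono gC, assoc, hb', ← assoc, hk_def, kernel.lift_ι, biprod.lift_snd]
  have covKE : CovExact 𝒲 k e := by
    apply covOfSES sesKE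
    intro W hW v
    obtain ⟨sq, hsq⟩ := (covC W hW).2.2 (v ≫ s.b)
    have h1 : (v - sq ≫ t) ≫ s.b = 0 := by
      rw [Preadditive.sub_comp, assoc, ht]
      have : sq ≫ fC = v ≫ s.b := hsq
      rw [this, sub_self]
    obtain ⟨r, hrr⟩ := s.ses.liftKer (v - sq ≫ t) h1
    obtain ⟨pr, hpr⟩ := (covA W hW).2.2 r
    have hpr' : pr ≫ fA = r := hpr
    refine ⟨biprod.lift pr sq, ?_⟩
    rw [he_def, biprod.lift_desc, ← assoc, hpr', hrr, sub_add_cancel]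
  have contraKE : ContraExact 𝒲 gA fA → ContraExact 𝒲 gC fC → ContraExact 𝒲 k e := by
    intro hcA hcC
    apply contraOfSES sesKE
    intro V hV φ
    obtain ⟨ψ, hψ⟩ := (hcA V hV).2.2 (a' ≫ φ)
    have hψ' : gA ≫ ψ = a' ≫ φ := hψ
    have e1 : a' ≫ k ≫ biprod.fst ≫ ψ = gA ≫ ψ := by
      rw [← assoc, ha', assoc, ← assoc biprod.inl biprod.fst ψ, biprod.inl_fst, id_comp]
    have hφ'0 : a' ≫ (φ - k ≫ biprod.fst ≫ ψ) = 0 := by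
      rw [Preadditive.comp_sub, e1, hψ', sub_self]
    obtain ⟨χ, hχ⟩ := sesNext.descCoker _ hφ'0
    obtain ⟨ω, hω⟩ := (hcC V hV).2.2 χ
    have hω' : gC ≫ ω = χ := hω
    refine ⟨biprod.fst ≫ ψ + biprod.snd ≫ ω, ?_⟩
    rw [Preadditive.comp_add]
    have h5 : k ≫ biprod.snd ≫ ω = φ - k ≫ biprod.fst ≫ ψ := by
      rw [← assoc, ← hb', assoc, hω', hχ]
    rw [h5]
    abel
  exact { next := { B := kernel e, a := a', b := b', ses := sesNext, cov := covNext },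
          k := k, e := e, ses := sesKE, cov := covKE, contra := contraKE }

end Stmt10Constr
variable (𝒲 : Set C) in
/-- Output of the initial step. -/
structure InitOut {X1 X0 X K1 W00 : C} (x : X1 ⟶ X0) (y : X0 ⟶ X)
    (g0 : K1 ⟶ W00) (f0 : W00 ⟶ X0) where
  next : St 𝒲 K1 X1
  ι : next.B ⟶ W00
  e : W00 ⟶ X
  ses : SES ι e
  cov : CovExact 𝒲 ι e
  contra : ContraExact 𝒲 g0 f0 → ContraExact 𝒲 x y → ContraExact 𝒲 ι e

noncomputable def init {𝒲 : Set C} {X1 X0 X K1 W00 : C} (x : X1 ⟶ X0) (y : X0 ⟶ X)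
    (g0 : K1 ⟶ W00) (f0 : W00 ⟶ X0)
    (sesxy : SES x y) (covxy : CovExact 𝒲 x y)
    (ses0 : SES g0 f0) (cov0 : CovExact 𝒲 g0 f0) :
    InitOut 𝒲 x y g0 f0 := by
  classical
  haveI := sesxy.mono  -- Mono x
  haveI := sesxy.epi   -- Epi y
  haveI := ses0.mono   -- Mono g0
  haveI := ses0.epi    -- Epi f0
  set e : W00 ⟶ X := f0 ≫ y with he_def
  haveI hepi_e : Epi e := by rw [he_def]; exact epi_comp _ _
  set ι : kernel e ⟶ W00 := kernel.ι e with hι_def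
  have hιe : ι ≫ e = 0 := kernel.condition e
  have sesIE : SES ι e :=
    ⟨hιe, ShortComplex.ShortExact.mk'
      (ShortComplex.exact_of_f_is_kernel _ (kernelIsKernel e)) inferInstance hepi_e⟩
  have ha0 : g0 ≫ e = 0 := by rw [he_def, ← assoc, ses0.w, zero_comp]
  set a0 : K1 ⟶ kernel e := kernel.lift e g0 ha0 with ha0_def
  have ha : a0 ≫ ι = g0 := kernel.lift_ι _ _ _
  have hb0y : (ι ≫ f0) ≫ y = 0 := by rw [assoc, ← he_def, hιe]
  have hb00 := sesxy.liftKer (ι ≫ f0) hb0y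
  set b0 : kernel e ⟶ X1 := hb00.choose with hb0_def
  have hb : b0 ≫ x = ι ≫ f0 := hb00.choose_spec
  haveI hmι : Mono ι := by rw [hι_def]; infer_instance
  have hmono_a0 : Mono a0 := by
    haveI : Mono (a0 ≫ ι) := by rw [ha]; infer_instance
    exact mono_of_mono a0 ι
  have wab : a0 ≫ b0 = 0 := by
    rw [← cancel_mono x, assoc, hb, zero_comp, ← assoc, ha, ses0.w]
  have hepi_b0 : Epi b0 := by
    rw [epi_iff_surjective_up_to_refinements]
    intro T z
    obtain ⟨T₁, π₁, hπ₁, p, hp⟩ := surjective_up_to_refinements_of_epi f0 (z ≫ x)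
    have hpe : p ≫ e = 0 := by
      rw [he_def, ← assoc, ← hp]
      simp only [assoc, sesxy.w, comp_zero]
    refine ⟨T₁, π₁, hπ₁, kernel.lift e p hpe, ?_⟩
    rw [← cancel_mono x, assoc, assoc, hb, ← assoc (kernel.lift e p hpe), hι_def,
      kernel.lift_ι]
    exact hp
  have lift_aux : ∀ {T : C} (v : T ⟶ kernel e), v ≫ b0 = 0 → ∃ u : T ⟶ K1, u ≫ a0 = v := by
    intro T v hv
    have h1 : (v ≫ ι) ≫ f0 = 0 := by
      rw [assoc, ← hb, ← assoc, hv, zero_comp]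
    obtain ⟨u, hu⟩ := ses0.liftKer (v ≫ ι) h1
    exact ⟨u, by rw [← cancel_mono ι, assoc, ha, hu]⟩
  have sesN : SES a0 b0 := SES.make wab hmono_a0 hepi_b0 lift_aux
  have covN : CovExact 𝒲 a0 b0 := by
    apply covOfSES sesN
    intro W hW v
    obtain ⟨p, hp⟩ := (cov0 W hW).2.2 (v ≫ x)
    have hp' : p ≫ f0 = v ≫ x := hp
    have hpe : p ≫ e = 0 := by
      rw [he_def, ← assoc, hp', assoc, sesxy.w, comp_zero]
    refine ⟨kernel.lift e p hpe, ?_⟩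
    rw [← cancel_mono x, assoc, hb, ← assoc, hι_def, kernel.lift_ι, hp']
  have covIE : CovExact 𝒲 ι e := by
    apply covOfSES sesIE
    intro W hW v
    obtain ⟨sq, hsq⟩ := (covxy W hW).2.2 v
    have hsq' : sq ≫ y = v := hsq
    obtain ⟨p, hp⟩ := (cov0 W hW).2.2 sq
    have hp' : p ≫ f0 = sq := hp
    exact ⟨p, by rw [he_def, ← assoc, hp', hsq']⟩
  have contraIE : ContraExact 𝒲 g0 f0 → ContraExact 𝒲 x y → ContraExact 𝒲 ι e := by
    intro hc0 hcxy
    apply contraOfSES sesIE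
    intro V hV φ
    obtain ⟨ψ, hψ⟩ := (hc0 V hV).2.2 (a0 ≫ φ)
    have hψ' : g0 ≫ ψ = a0 ≫ φ := hψ
    have hφ'0 : a0 ≫ (φ - ι ≫ ψ) = 0 := by
      rw [Preadditive.comp_sub, ← assoc, ha, hψ', sub_self]
    obtain ⟨χ, hχ⟩ := sesN.descCoker _ hφ'0
    obtain ⟨ω, hω⟩ := (hcxy V hV).2.2 χ
    have hω' : x ≫ ω = χ := hω
    refine ⟨ψ + f0 ≫ ω, ?_⟩
    rw [Preadditive.comp_add]
    have h5 : ι ≫ f0 ≫ ω = φ - ι ≫ ψ := by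
      rw [← assoc, ← hb, assoc, hω', hχ]
    rw [h5]
    abel
  exact { next := { B := kernel e, a := a0, b := b0, ses := sesN, cov := covN },
          ι := ι, e := e, ses := sesIE, cov := covIE, contra := contraIE }

/-- Constructing a proper `𝒲`-resolution of the last term of a
`Hom(𝒲,-)`-exact short exact sequence `0→X₁→X₀→X→0` from proper `𝒲`-resolutions of
the first two terms, when `𝒲` is closed under isomorphisms and finite direct sums. -/
theorem stmt_10 (𝒲 : Set C)
    (hiso : ∀ {U V : C}, (U ≅ V) → U ∈ 𝒲 → V ∈ 𝒲)
    (hsum : ∀ {U V : C}, U ∈ 𝒲 → V ∈ 𝒲 → (U ⊞ V) ∈ 𝒲)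
    {X1 X0 X : C} (x : X1 ⟶ X0) (y : X0 ⟶ X)
    (hses : SES x y) (hcov : CovExact 𝒲 x y)
    (W0 W1 : ℕ → C)
    (R0 : ProperResolution 𝒲 X0 W0) (R1 : ProperResolution 𝒲 X1 W1) :
    -- (1) a proper 𝒲-resolution of X with 0-th term W₀⁰ and i-th term W₀ⁱ ⊕ W₁^{i-1} (i ≥ 1)
    Nonempty (ProperResolution 𝒲 X
      (fun i => match i with | 0 => W0 0 | n + 1 => W0 (n + 1) ⊞ W1 n)) ∧
    -- (2) if everything in sight is Hom(-,𝒲)-exact, it can be chosen Hom(-,𝒲)-exact as well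
    (R0.IsContraExact → R1.IsContraExact → ContraExact 𝒲 x y →
      ∃ R : ProperResolution 𝒲 X
          (fun i => match i with | 0 => W0 0 | n + 1 => W0 (n + 1) ⊞ W1 n),
        R.IsContraExact) := by
  classical
  obtain ⟨KA, hKA, g0, f0, mem0, ses0, prop0⟩ := R0
  obtain ⟨KB, hKB, g1, f1, mem1, ses1, prop1⟩ := R1
  subst hKA hKB
  let I : InitOut 𝒲 x y (g0 0) (f0 0) :=
    init x y (g0 0) (f0 0) hses hcov (ses0 0) (prop0 0)
  let out0 : ∀ n (s : St 𝒲 (KA (n + 1)) (KB n)),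
      StepOut 𝒲 (g0 (n + 1)) (f0 (n + 1)) (g1 n) (f1 n) s := fun n s =>
    step (g0 (n + 1)) (f0 (n + 1)) (g1 n) (f1 n)
      (ses0 (n + 1)) (prop0 (n + 1)) (ses1 n) (prop1 n) (mem1 n) s
  let chain : ∀ n, St 𝒲 (KA (n + 1)) (KB n) := fun n =>
    Nat.rec I.next (fun n s => (out0 n s).next) n
  let out : ∀ n, StepOut 𝒲 (g0 (n + 1)) (f0 (n + 1)) (g1 n) (f1 n) (chain n) :=
    fun n => out0 n (chain n)
  let R : ProperResolution 𝒲 X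
      (fun i => match i with | 0 => W0 0 | n + 1 => W0 (n + 1) ⊞ W1 n) :=
    { K := fun i => match i with | 0 => X | n + 1 => (chain n).B
      hK := rfl
      g := fun i => match i with | 0 => I.ι | n + 1 => (out n).k
      f := fun i => match i with | 0 => I.e | n + 1 => (out n).e
      mem := fun i => match i with | 0 => mem0 0 | n + 1 => hsum (mem0 (n + 1)) (mem1 n)
      ses := fun i => match i with | 0 => I.ses | n + 1 => (out n).ses
      proper := fun i => match i with | 0 => I.cov | n + 1 => (out n).cov }
  constructor
  · exact ⟨R⟩
  · intro hc0 hc1 hcxy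
    refine ⟨R, fun i => ?_⟩
    match i with
    | 0 => exact I.contra (hc0 0) hcxy
    | n + 1 => exact (out n).contra (hc0 (n + 1)) (hc1 n)
end

section
/- Let C be an abelian category and 𝒲 a class of objects of C closed under isomorphisms and finite direct sums. Let 0→X→Y→Z→0 be a short exact sequence in C that is both Hom(𝒲,−)-exact and Hom(−,𝒲)-exact. If X and Z belong to the Gorenstein category G(𝒲), then Y belongs to G(𝒲). -/
open CategoryTheory Category Limits

universe v u

variable {C : Type u} [Category.{v} C] [Abelian C]

namespace SES

variable {A B X : C} {f : A ⟶ B} {g : B ⟶ X}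

lemma w_s12 (h : SES f g) : f ≫ g = 0 := h.choose

lemma mono_s12 (h : SES f g) : Mono f := h.choose_spec.mono_f

lemma epi_s12 (h : SES f g) : Epi g := h.choose_spec.epi_g

lemma lift (h : SES f g) {T : C} (v : T ⟶ B) (hv : v ≫ g = 0) :
    ∃ u : T ⟶ A, u ≫ f = v := by
  obtain ⟨w_s12, hse⟩ := h
  haveI := hse.mono_f
  exact ⟨hse.exact.lift v hv, hse.exact.lift_f v hv⟩

lemma desc (h : SES f g) {T : C} (v : B ⟶ T) (hv : f ≫ v = 0) :
    ∃ u : X ⟶ T, g ≫ u = v := by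
  obtain ⟨w_s12, hse⟩ := h
  haveI := hse.epi_g
  exact ⟨hse.exact.desc v hv, hse.exact.g_desc v hv⟩

noncomputable def fIsKernel (h : SES f g) :
    IsLimit (KernelFork.ofι f h.w_s12) := by
  haveI := h.choose_spec.mono_f
  exact h.choose_spec.exact.fIsKernel

noncomputable def gIsCokernel (h : SES f g) :
    IsColimit (CokernelCofork.ofπ g h.w_s12) := by
  haveI := h.choose_spec.epi_g
  exact h.choose_spec.exact.gIsCokernel

end SES

lemma covExact_of_surj (𝒲 : Set C) {A B X : C} {f : A ⟶ B} {g : B ⟶ X} (h : SES f g)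
    (hs : ∀ W ∈ 𝒲, ∀ v : W ⟶ X, ∃ u : W ⟶ B, u ≫ g = v) : CovExact 𝒲 f g := by
  intro W hW
  haveI := h.mono_s12
  exact ⟨fun u₁ u₂ hu => (cancel_mono f).1 hu, fun v hv => h.lift v hv, fun v => hs W hW v⟩

lemma contraExact_of_ext (𝒲 : Set C) {A B X : C} {f : A ⟶ B} {g : B ⟶ X} (h : SES f g)
    (hs : ∀ W ∈ 𝒲, ∀ v : A ⟶ W, ∃ u : B ⟶ W, f ≫ u = v) : ContraExact 𝒲 f g := by
  intro W hW
  haveI := h.epi_s12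
  exact ⟨fun u₁ u₂ hu => (cancel_epi g).1 hu, fun v hv => h.desc v hv, fun v => hs W hW v⟩

lemma stage0 (𝒲 : Set C) {X Y Z X' Z' : C} (eX : X' = X) (eZ : Z' = Z)
    (f : X ⟶ Y) (g : Y ⟶ Z) (hses : SES f g) (hcov : CovExact 𝒲 f g)
    (hcon : ContraExact 𝒲 f g) :
    SES (eqToHom eX ≫ f) (g ≫ eqToHom eZ.symm) ∧
      CovExact 𝒲 (eqToHom eX ≫ f) (g ≫ eqToHom eZ.symm) ∧
      ContraExact 𝒲 (eqToHom eX ≫ f) (g ≫ eqToHom eZ.symm) := by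
  subst eX; subst eZ
  simpa using ⟨hses, hcov, hcon⟩

lemma horseshoe (𝒲 : Set C) {X Y Z KX WX KZ WZ : C}
    (f : X ⟶ Y) (g : Y ⟶ Z) (hses : SES f g) (hcov : CovExact 𝒲 f g)
    (hcon : ContraExact 𝒲 f g)
    (kX : KX ⟶ WX) (pX : WX ⟶ X) (hWX : WX ∈ 𝒲)
    (sesX : SES kX pX) (covX : CovExact 𝒲 kX pX) (conX : ContraExact 𝒲 kX pX)
    (kZ : KZ ⟶ WZ) (pZ : WZ ⟶ Z) (hWZ : WZ ∈ 𝒲)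
    (sesZ : SES kZ pZ) (covZ : CovExact 𝒲 kZ pZ) (conZ : ContraExact 𝒲 kZ pZ) :
    ∃ (KY : C) (f' : KX ⟶ KY) (g' : KY ⟶ KZ) (kY : KY ⟶ WX ⊞ WZ) (pY : WX ⊞ WZ ⟶ Y),
      (SES f' g' ∧ CovExact 𝒲 f' g' ∧ ContraExact 𝒲 f' g') ∧
      (SES kY pY ∧ CovExact 𝒲 kY pY ∧ ContraExact 𝒲 kY pY) := by
  haveI := hses.mono_s12
  haveI := hses.epi_s12
  haveI := sesX.mono_s12
  haveI := sesX.epi_s12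
  haveI := sesZ.mono_s12
  haveI := sesZ.epi_s12
  obtain ⟨t, ht⟩ := (hcov WZ hWZ).2.2 pZ
  replace ht : t ≫ g = pZ := ht
  set pY : WX ⊞ WZ ⟶ Y := biprod.desc (pX ≫ f) t with hpYdef
  have hinl : biprod.inl ≫ pY = pX ≫ f := biprod.inl_desc _ _
  have hinr : biprod.inr ≫ pY = t := biprod.inr_desc _ _
  have hpYg : pY ≫ g = biprod.snd ≫ pZ := by
    apply biprod.hom_ext'
    · rw [← assoc, hinl, assoc, hses.w_s12, comp_zero, ← assoc, biprod.inl_snd, zero_comp]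
    · rw [← assoc, hinr, ht, ← assoc, biprod.inr_snd, id_comp]
  haveI hEpY : Epi pY := by
    rw [Preadditive.epi_iff_cancel_zero]
    intro Q c hc
    have h2 : f ≫ c = 0 := by
      rw [← cancel_epi pX, ← assoc, ← hinl, assoc, hc, comp_zero, comp_zero]
    obtain ⟨d, hd⟩ := hses.desc c h2
    have h3 : pZ ≫ d = 0 := by
      rw [← ht, assoc, hd, ← hinr, assoc, hc, comp_zero]
    have hd0 : d = 0 := by rw [← cancel_epi pZ, h3, comp_zero]
    rw [← hd, hd0, comp_zero]
  set KY := kernel pY with hKYdef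
  set kY : KY ⟶ WX ⊞ WZ := kernel.ι pY with hkYdef
  have hkY : kY ≫ pY = 0 := kernel.condition pY
  haveI : Mono kY := inferInstanceAs (Mono (kernel.ι pY))
  have sesY : SES kY pY :=
    ⟨hkY, ShortComplex.ShortExact.mk'
      (ShortComplex.exact_of_f_is_kernel _ (kernelIsKernel pY)) inferInstance inferInstance⟩
  have hkXinl : (kX ≫ biprod.inl) ≫ pY = 0 := by
    rw [assoc, hinl, ← assoc, sesX.w_s12, zero_comp]
  set f' : KX ⟶ KY := kernel.lift pY (kX ≫ biprod.inl) hkXinl with hf'def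
  have hf' : f' ≫ kY = kX ≫ biprod.inl := kernel.lift_ι _ _ _
  have hsnd : (kY ≫ biprod.snd) ≫ pZ = 0 := by
    rw [assoc, ← hpYg, ← assoc, hkY, zero_comp]
  obtain ⟨g', hg'⟩ := KernelFork.IsLimit.lift' sesZ.fIsKernel (kY ≫ biprod.snd) hsnd
  replace hg' : g' ≫ kZ = kY ≫ biprod.snd := hg'
  have hw' : f' ≫ g' = 0 := by
    rw [← cancel_mono kZ, assoc, hg', ← assoc, hf', assoc, biprod.inl_snd, comp_zero,
      zero_comp]
  haveI hMf' : Mono f' := by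
    have : Mono (f' ≫ kY) := by rw [hf']; exact mono_comp _ _
    exact mono_of_mono f' kY
  haveI hEg' : Epi g' := by
    rw [epi_iff_surjective_up_to_refinements]
    intro T z
    have h1 : ((z ≫ kZ ≫ biprod.inr) ≫ pY) ≫ g = 0 := by
      simp only [assoc]
      rw [reassoc_of% hinr, ht, sesZ.w_s12, comp_zero]
    obtain ⟨x, hx⟩ := hses.lift _ h1
    simp only [assoc] at hx
    obtain ⟨T', π, hπ, q, hq⟩ := surjective_up_to_refinements_of_epi pX x
    have h2 : (π ≫ z ≫ kZ ≫ biprod.inr - q ≫ biprod.inl) ≫ pY = 0 := by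
      simp only [Preadditive.sub_comp, assoc, hinl]
      rw [← hx, reassoc_of% hq, sub_self]
    refine ⟨T', π, hπ, kernel.lift pY _ h2, ?_⟩
    rw [← cancel_mono kZ]
    simp only [assoc, hg']
    conv_rhs => rw [← assoc, kernel.lift_ι]
    simp
  have hexact : (ShortComplex.mk f' g' hw').Exact := by
    apply ShortComplex.exact_of_f_is_kernel
    refine KernelFork.IsLimit.ofι' f' hw' (fun {T} u hu => ?_)
    have hsnd0 : u ≫ kY ≫ biprod.snd = 0 := by
      rw [← hg', ← assoc, hu, zero_comp]
    have hvinl : (u ≫ kY ≫ biprod.fst) ≫ biprod.inl = u ≫ kY := by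
      apply biprod.hom_ext
      · simp only [assoc, biprod.inl_fst, comp_id]
      · simp only [assoc, biprod.inl_snd, comp_zero]
        exact hsnd0.symm
    have h3 : (u ≫ kY ≫ biprod.fst) ≫ pX = 0 := by
      rw [← cancel_mono f, assoc, ← hinl, ← assoc, hvinl, assoc, hkY, comp_zero,
        zero_comp]
    obtain ⟨r, hr⟩ := KernelFork.IsLimit.lift' sesX.fIsKernel (u ≫ kY ≫ biprod.fst) h3
    replace hr : r ≫ kX = u ≫ kY ≫ biprod.fst := hr
    refine ⟨r, ?_⟩
    rw [← cancel_mono kY, assoc, hf', ← assoc, hr, hvinl]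
  have sesf' : SES f' g' := ⟨hw', ShortComplex.ShortExact.mk' hexact hMf' hEg'⟩
  have covY : CovExact 𝒲 kY pY := by
    refine covExact_of_surj 𝒲 sesY (fun W hW v => ?_)
    obtain ⟨s, hs⟩ := (covZ W hW).2.2 (v ≫ g)
    replace hs : s ≫ pZ = v ≫ g := hs
    have h1 : (v - s ≫ t) ≫ g = 0 := by
      rw [Preadditive.sub_comp, assoc, ht, hs, sub_self]
    obtain ⟨r, hr⟩ := hses.lift _ h1
    obtain ⟨q, hq⟩ := (covX W hW).2.2 r
    replace hq : q ≫ pX = r := hq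
    refine ⟨biprod.lift q s, ?_⟩
    rw [hpYdef, biprod.lift_desc, ← assoc, hq, hr, sub_add_cancel]
  have conY : ContraExact 𝒲 kY pY := by
    refine contraExact_of_ext 𝒲 sesY (fun W hW v => ?_)
    obtain ⟨a, ha⟩ := (conX W hW).2.2 (f' ≫ v)
    replace ha : kX ≫ a = f' ≫ v := ha
    have h1 : f' ≫ (v - kY ≫ biprod.fst ≫ a) = 0 := by
      rw [Preadditive.comp_sub, ← assoc, hf', assoc, biprod.inl_fst_assoc, ha, sub_self]
    obtain ⟨e, he⟩ := sesf'.desc _ h1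
    obtain ⟨m, hm⟩ := (conZ W hW).2.2 e
    replace hm : kZ ≫ m = e := hm
    refine ⟨biprod.fst ≫ a + biprod.snd ≫ m, ?_⟩
    rw [Preadditive.comp_add, ← assoc kY biprod.snd m, ← hg', assoc, hm, he]
    abel
  have covf' : CovExact 𝒲 f' g' := by
    refine covExact_of_surj 𝒲 sesf' (fun W hW z => ?_)
    have h1 : ((z ≫ kZ ≫ biprod.inr) ≫ pY) ≫ g = 0 := by
      simp only [assoc]
      rw [reassoc_of% hinr, ht, sesZ.w_s12, comp_zero]
    obtain ⟨x, hx⟩ := hses.lift _ h1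
    simp only [assoc] at hx
    obtain ⟨q, hq⟩ := (covX W hW).2.2 x
    replace hq : q ≫ pX = x := hq
    have h2 : (z ≫ kZ ≫ biprod.inr - q ≫ biprod.inl) ≫ pY = 0 := by
      simp only [Preadditive.sub_comp, assoc, hinl]
      rw [← hx, reassoc_of% hq, sub_self]
    refine ⟨kernel.lift pY _ h2, ?_⟩
    show kernel.lift pY _ h2 ≫ g' = z
    rw [← cancel_mono kZ]
    simp only [assoc, hg']
    conv_lhs => rw [← assoc, kernel.lift_ι]
    simp
  have conf' : ContraExact 𝒲 f' g' := by
    refine contraExact_of_ext 𝒲 sesf' (fun W hW v => ?_)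
    obtain ⟨a, ha⟩ := (conX W hW).2.2 v
    replace ha : kX ≫ a = v := ha
    refine ⟨kY ≫ biprod.fst ≫ a, ?_⟩
    rw [← assoc, hf', assoc, biprod.inl_fst_assoc, ha]
  exact ⟨KY, f', g', kY, pY, ⟨sesf', covf', conf'⟩, ⟨sesY, covY, conY⟩⟩

lemma cohorseshoe (𝒲 : Set C) {X Y Z WX CX WZ CZ : C}
    (f : X ⟶ Y) (g : Y ⟶ Z) (hses : SES f g) (hcov : CovExact 𝒲 f g)
    (hcon : ContraExact 𝒲 f g)
    (iX : X ⟶ WX) (qX : WX ⟶ CX) (hWX : WX ∈ 𝒲)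
    (sesX : SES iX qX) (covX : CovExact 𝒲 iX qX) (conX : ContraExact 𝒲 iX qX)
    (iZ : Z ⟶ WZ) (qZ : WZ ⟶ CZ) (hWZ : WZ ∈ 𝒲)
    (sesZ : SES iZ qZ) (covZ : CovExact 𝒲 iZ qZ) (conZ : ContraExact 𝒲 iZ qZ) :
    ∃ (CY : C) (f' : CX ⟶ CY) (g' : CY ⟶ CZ) (iY : Y ⟶ WX ⊞ WZ) (qY : WX ⊞ WZ ⟶ CY),
      (SES f' g' ∧ CovExact 𝒲 f' g' ∧ ContraExact 𝒲 f' g') ∧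
      (SES iY qY ∧ CovExact 𝒲 iY qY ∧ ContraExact 𝒲 iY qY) := by
  haveI := hses.mono_s12
  haveI := hses.epi_s12
  haveI := sesX.mono_s12
  haveI := sesX.epi_s12
  haveI := sesZ.mono_s12
  haveI := sesZ.epi_s12
  obtain ⟨t, ht⟩ := (hcon WX hWX).2.2 iX
  replace ht : f ≫ t = iX := ht
  set iY : Y ⟶ WX ⊞ WZ := biprod.lift t (g ≫ iZ) with hiYdef
  have hfst : iY ≫ biprod.fst = t := biprod.lift_fst _ _
  have hsnd : iY ≫ biprod.snd = g ≫ iZ := biprod.lift_snd _ _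
  have hfiY : f ≫ iY = iX ≫ biprod.inl := by
    apply biprod.hom_ext
    · rw [assoc, hfst, ht, assoc, biprod.inl_fst, comp_id]
    · rw [assoc, hsnd, ← assoc, hses.w_s12, zero_comp, assoc, biprod.inl_snd, comp_zero]
  haveI hMiY : Mono iY := by
    rw [Preadditive.mono_iff_cancel_zero]
    intro Q c hc
    have hct : c ≫ t = 0 := by rw [← hfst, ← assoc, hc, zero_comp]
    have hcg : c ≫ g = 0 := by
      rw [← cancel_mono iZ, assoc, ← hsnd, ← assoc, hc, zero_comp, zero_comp]
    obtain ⟨d, hd⟩ := hses.lift c hcg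
    have hd0 : d = 0 := by
      rw [← cancel_mono iX, ← ht, ← assoc, hd, hct, zero_comp]
    rw [← hd, hd0, zero_comp]
  set CY := cokernel iY with hCYdef
  set qY : WX ⊞ WZ ⟶ CY := cokernel.π iY with hqYdef
  have hiYqY : iY ≫ qY = 0 := cokernel.condition iY
  haveI : Epi qY := inferInstanceAs (Epi (cokernel.π iY))
  have sesY : SES iY qY :=
    ⟨hiYqY, ShortComplex.ShortExact.mk'
      (ShortComplex.exact_of_g_is_cokernel _ (cokernelIsCokernel iY)) inferInstance
      inferInstance⟩
  have hsndqZ : iY ≫ biprod.snd ≫ qZ = 0 := by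
    rw [← assoc, hsnd, assoc, sesZ.w_s12, comp_zero]
  set g' : CY ⟶ CZ := cokernel.desc iY (biprod.snd ≫ qZ) hsndqZ with hg'def
  have hg' : qY ≫ g' = biprod.snd ≫ qZ := cokernel.π_desc _ _ _
  have hinlqY : iX ≫ biprod.inl ≫ qY = 0 := by
    rw [← assoc, ← hfiY, assoc, hiYqY, comp_zero]
  obtain ⟨f', hf'⟩ := CokernelCofork.IsColimit.desc' sesX.gIsCokernel
    (biprod.inl ≫ qY) hinlqY
  replace hf' : qX ≫ f' = biprod.inl ≫ qY := hf'
  have hw' : f' ≫ g' = 0 := by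
    rw [← cancel_epi qX, ← assoc, hf', assoc, hg', ← assoc, biprod.inl_snd, zero_comp,
      comp_zero]
  haveI hEg' : Epi g' := by
    have : Epi (qY ≫ g') := by rw [hg']; exact epi_comp _ _
    exact epi_of_epi qY g'
  haveI hMf' : Mono f' := by
    rw [Preadditive.mono_iff_cancel_zero]
    intro T z hz
    obtain ⟨T', π, hπ, x, hx⟩ := surjective_up_to_refinements_of_epi qX z
    have h1 : (x ≫ biprod.inl) ≫ qY = 0 := by
      rw [assoc, ← hf', ← assoc, ← hx, assoc, hz, comp_zero]
    obtain ⟨y, hy⟩ := sesY.lift (x ≫ biprod.inl) h1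
    have hyg : y ≫ g = 0 := by
      rw [← cancel_mono iZ, assoc, ← hsnd, ← assoc, hy, assoc, biprod.inl_snd,
        comp_zero, zero_comp]
    obtain ⟨d, hd⟩ := hses.lift y hyg
    have hdx : d ≫ iX = x := by
      rw [← ht, ← assoc, hd, ← hfst, ← assoc, hy, assoc, biprod.inl_fst, comp_id]
    have : π ≫ z = 0 := by
      rw [hx, ← hdx, assoc, sesX.w_s12, comp_zero]
    rw [← cancel_epi π, this, comp_zero]
  have hexact : (ShortComplex.mk f' g' hw').Exact := by
    apply ShortComplex.exact_of_g_is_cokernel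
    refine CokernelCofork.IsColimit.ofπ' g' hw' (fun {T} u hu => ?_)
    have h0 : biprod.inl ≫ qY ≫ u = 0 := by
      rw [← assoc, ← hf', assoc, hu, comp_zero]
    have key : ∀ (u' : WX ⊞ WZ ⟶ T), biprod.inl ≫ u' = 0 →
        biprod.snd ≫ biprod.inr ≫ u' = u' := by
      intro u' h
      conv_rhs => rw [← id_comp u', ← biprod.total]
      rw [Preadditive.add_comp]
      simp only [assoc]
      rw [h, comp_zero, zero_add]
    have hiZ0 : iZ ≫ biprod.inr ≫ qY ≫ u = 0 := by
      rw [← cancel_epi g, comp_zero, ← reassoc_of% hsnd, key (qY ≫ u) h0, ← assoc,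
        hiYqY, zero_comp]
    obtain ⟨e, he⟩ := CokernelCofork.IsColimit.desc' sesZ.gIsCokernel
      (biprod.inr ≫ qY ≫ u) hiZ0
    replace he : qZ ≫ e = biprod.inr ≫ qY ≫ u := he
    refine ⟨e, ?_⟩
    rw [← cancel_epi qY, ← assoc, hg', assoc, he]
    exact key (qY ≫ u) h0
  have sesf' : SES f' g' := ⟨hw', ShortComplex.ShortExact.mk' hexact hMf' hEg'⟩
  have covY : CovExact 𝒲 iY qY := by
    refine covExact_of_surj 𝒲 sesY (fun W hW v => ?_)
    obtain ⟨s, hs⟩ := (covZ W hW).2.2 (v ≫ g')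
    replace hs : s ≫ qZ = v ≫ g' := hs
    have h1 : (v - s ≫ biprod.inr ≫ qY) ≫ g' = 0 := by
      rw [Preadditive.sub_comp]
      simp only [assoc]
      rw [hg', biprod.inr_snd_assoc, hs, sub_self]
    obtain ⟨r, hr⟩ := sesf'.lift _ h1
    obtain ⟨q, hq⟩ := (covX W hW).2.2 r
    replace hq : q ≫ qX = r := hq
    refine ⟨q ≫ biprod.inl + s ≫ biprod.inr, ?_⟩
    show (q ≫ biprod.inl + s ≫ biprod.inr) ≫ qY = v
    rw [Preadditive.add_comp]
    simp only [assoc]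
    rw [← hf', ← assoc, hq, hr]
    abel
  have conY : ContraExact 𝒲 iY qY := by
    refine contraExact_of_ext 𝒲 sesY (fun W hW v => ?_)
    obtain ⟨a, ha⟩ := (conX W hW).2.2 (f ≫ v)
    replace ha : iX ≫ a = f ≫ v := ha
    have h1 : f ≫ (v - t ≫ a) = 0 := by
      rw [Preadditive.comp_sub, ← assoc, ht, ha, sub_self]
    obtain ⟨e, he⟩ := hses.desc _ h1
    obtain ⟨m, hm⟩ := (conZ W hW).2.2 e
    replace hm : iZ ≫ m = e := hm
    refine ⟨biprod.fst ≫ a + biprod.snd ≫ m, ?_⟩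
    rw [Preadditive.comp_add, ← assoc, hfst, ← assoc, hsnd, assoc, hm, he]
    abel
  have covf' : CovExact 𝒲 f' g' := by
    refine covExact_of_surj 𝒲 sesf' (fun W hW z => ?_)
    obtain ⟨s, hs⟩ := (covZ W hW).2.2 z
    replace hs : s ≫ qZ = z := hs
    refine ⟨s ≫ biprod.inr ≫ qY, ?_⟩
    show (s ≫ biprod.inr ≫ qY) ≫ g' = z
    simp only [assoc]
    rw [hg', biprod.inr_snd_assoc, hs]
  have conf' : ContraExact 𝒲 f' g' := by
    refine contraExact_of_ext 𝒲 sesf' (fun W hW v => ?_)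
    have h0 : f ≫ t ≫ qX = 0 := by rw [← assoc, ht, sesX.w_s12]
    obtain ⟨x, hx⟩ := hses.desc _ h0
    obtain ⟨m, hm⟩ := (conZ W hW).2.2 (x ≫ v)
    replace hm : iZ ≫ m = x ≫ v := hm
    have hβ : iY ≫ (biprod.fst ≫ qX ≫ v - biprod.snd ≫ m) = 0 := by
      rw [Preadditive.comp_sub, reassoc_of% hfst, reassoc_of% hsnd, hm,
        reassoc_of% hx, sub_self]
    obtain ⟨u, hu⟩ := sesY.desc _ hβ
    refine ⟨u, ?_⟩
    rw [← cancel_epi qX, ← assoc, hf', assoc, hu, Preadditive.comp_sub, ← assoc,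
      biprod.inl_fst, id_comp, ← assoc, biprod.inl_snd, zero_comp, sub_zero]
  exact ⟨CY, f', g', iY, qY, ⟨sesf', covf', conf'⟩, ⟨sesY, covY, conY⟩⟩

abbrev PStage (𝒲 : Set C) {X Z : C} {WX WZ : ℕ → C} (RX : ProperResolution 𝒲 X WX)
    (RZ : ProperResolution 𝒲 Z WZ) (Y : C) (i : ℕ) :=
  Σ' (Yi : C) (fi : RX.K i ⟶ Yi) (gi : Yi ⟶ RZ.K i),
    SES fi gi ∧ CovExact 𝒲 fi gi ∧ ContraExact 𝒲 fi gi

noncomputable def pnext (𝒲 : Set C) {X Z : C} {WX WZ : ℕ → C}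
    (RX : ProperResolution 𝒲 X WX) (hRX : RX.IsContraExact)
    (RZ : ProperResolution 𝒲 Z WZ) (hRZ : RZ.IsContraExact) (Y : C) (i : ℕ)
    (s : PStage 𝒲 RX RZ Y i) :
    Σ' (s' : PStage 𝒲 RX RZ Y (i + 1)) (kY : s'.1 ⟶ WX i ⊞ WZ i)
      (pY : WX i ⊞ WZ i ⟶ s.1),
      SES kY pY ∧ CovExact 𝒲 kY pY ∧ ContraExact 𝒲 kY pY :=
  Nonempty.some (by
    obtain ⟨Yi, fi, gi, hses, hcov, hcon⟩ := s
    obtain ⟨KY, f', g', kY, pY, hA, hB⟩ := horseshoe 𝒲 fi gi hses hcov hcon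
      (RX.g i) (RX.f i) (RX.mem i) (RX.ses i) (RX.proper i) (hRX i)
      (RZ.g i) (RZ.f i) (RZ.mem i) (RZ.ses i) (RZ.proper i) (hRZ i)
    exact ⟨⟨⟨KY, f', g', hA⟩, kY, pY, hB⟩⟩)

noncomputable def pstages (𝒲 : Set C) {X Z : C} {WX WZ : ℕ → C}
    (RX : ProperResolution 𝒲 X WX) (hRX : RX.IsContraExact)
    (RZ : ProperResolution 𝒲 Z WZ) (hRZ : RZ.IsContraExact) (Y : C)
    (s0 : PStage 𝒲 RX RZ Y 0) : ∀ i, PStage 𝒲 RX RZ Y i :=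
  fun i => Nat.rec s0 (fun j s => (pnext 𝒲 RX hRX RZ hRZ Y j s).1) i

noncomputable def plink (𝒲 : Set C) {X Z : C} {WX WZ : ℕ → C}
    (RX : ProperResolution 𝒲 X WX) (hRX : RX.IsContraExact)
    (RZ : ProperResolution 𝒲 Z WZ) (hRZ : RZ.IsContraExact) (Y : C)
    (s0 : PStage 𝒲 RX RZ Y 0) (i : ℕ) :
    Σ' (kY : (pstages 𝒲 RX hRX RZ hRZ Y s0 (i + 1)).1 ⟶ WX i ⊞ WZ i)
      (pY : WX i ⊞ WZ i ⟶ (pstages 𝒲 RX hRX RZ hRZ Y s0 i).1),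
      SES kY pY ∧ CovExact 𝒲 kY pY ∧ ContraExact 𝒲 kY pY :=
  (pnext 𝒲 RX hRX RZ hRZ Y i (pstages 𝒲 RX hRX RZ hRZ Y s0 i)).2

lemma exists_properResolution (𝒲 : Set C)
    (hsum : ∀ {U V : C}, U ∈ 𝒲 → V ∈ 𝒲 → (U ⊞ V) ∈ 𝒲)
    {X Y Z : C} (f : X ⟶ Y) (g : Y ⟶ Z)
    (hses : SES f g) (hcov : CovExact 𝒲 f g) (hcon : ContraExact 𝒲 f g)
    {WX WZ : ℕ → C} (RX : ProperResolution 𝒲 X WX) (hRX : RX.IsContraExact)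
    (RZ : ProperResolution 𝒲 Z WZ) (hRZ : RZ.IsContraExact) :
    ∃ R : ProperResolution 𝒲 Y (fun i => WX i ⊞ WZ i), R.IsContraExact := by
  obtain ⟨h1, h2, h3⟩ := stage0 𝒲 RX.hK RZ.hK f g hses hcov hcon
  let s0 : PStage 𝒲 RX RZ Y 0 := ⟨Y, eqToHom RX.hK ≫ f, g ≫ eqToHom RZ.hK.symm, h1, h2, h3⟩
  let D := pstages 𝒲 RX hRX RZ hRZ Y s0
  let L := plink 𝒲 RX hRX RZ hRZ Y s0
  exact ⟨⟨fun i => (D i).1, rfl, fun i => (L i).1, fun i => (L i).2.1,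
    fun i => hsum (RX.mem i) (RZ.mem i), fun i => (L i).2.2.1, fun i => (L i).2.2.2.1⟩,
    fun i => (L i).2.2.2.2⟩

abbrev CStage (𝒲 : Set C) {X Z : C} {WX WZ : ℕ → C} (SX : CoproperCoresolution 𝒲 X WX)
    (SZ : CoproperCoresolution 𝒲 Z WZ) (Y : C) (i : ℕ) :=
  Σ' (Yi : C) (fi : SX.K i ⟶ Yi) (gi : Yi ⟶ SZ.K i),
    SES fi gi ∧ CovExact 𝒲 fi gi ∧ ContraExact 𝒲 fi gi

noncomputable def cnext (𝒲 : Set C) {X Z : C} {WX WZ : ℕ → C}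
    (SX : CoproperCoresolution 𝒲 X WX) (hSX : SX.IsCovExact)
    (SZ : CoproperCoresolution 𝒲 Z WZ) (hSZ : SZ.IsCovExact) (Y : C) (i : ℕ)
    (s : CStage 𝒲 SX SZ Y i) :
    Σ' (s' : CStage 𝒲 SX SZ Y (i + 1)) (iY : s.1 ⟶ WX i ⊞ WZ i)
      (qY : WX i ⊞ WZ i ⟶ s'.1),
      SES iY qY ∧ CovExact 𝒲 iY qY ∧ ContraExact 𝒲 iY qY :=
  Nonempty.some (by
    obtain ⟨Yi, fi, gi, hses, hcov, hcon⟩ := s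
    obtain ⟨CY, f', g', iY, qY, hA, hB⟩ := cohorseshoe 𝒲 fi gi hses hcov hcon
      (SX.g i) (SX.f i) (SX.mem i) (SX.ses i) (hSX i) (SX.coproper i)
      (SZ.g i) (SZ.f i) (SZ.mem i) (SZ.ses i) (hSZ i) (SZ.coproper i)
    exact ⟨⟨⟨CY, f', g', hA⟩, iY, qY, hB⟩⟩)

noncomputable def cstages (𝒲 : Set C) {X Z : C} {WX WZ : ℕ → C}
    (SX : CoproperCoresolution 𝒲 X WX) (hSX : SX.IsCovExact)
    (SZ : CoproperCoresolution 𝒲 Z WZ) (hSZ : SZ.IsCovExact) (Y : C)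
    (s0 : CStage 𝒲 SX SZ Y 0) : ∀ i, CStage 𝒲 SX SZ Y i :=
  fun i => Nat.rec s0 (fun j s => (cnext 𝒲 SX hSX SZ hSZ Y j s).1) i

noncomputable def clink (𝒲 : Set C) {X Z : C} {WX WZ : ℕ → C}
    (SX : CoproperCoresolution 𝒲 X WX) (hSX : SX.IsCovExact)
    (SZ : CoproperCoresolution 𝒲 Z WZ) (hSZ : SZ.IsCovExact) (Y : C)
    (s0 : CStage 𝒲 SX SZ Y 0) (i : ℕ) :
    Σ' (iY : (cstages 𝒲 SX hSX SZ hSZ Y s0 i).1 ⟶ WX i ⊞ WZ i)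
      (qY : WX i ⊞ WZ i ⟶ (cstages 𝒲 SX hSX SZ hSZ Y s0 (i + 1)).1),
      SES iY qY ∧ CovExact 𝒲 iY qY ∧ ContraExact 𝒲 iY qY :=
  (cnext 𝒲 SX hSX SZ hSZ Y i (cstages 𝒲 SX hSX SZ hSZ Y s0 i)).2

lemma exists_coproperCoresolution (𝒲 : Set C)
    (hsum : ∀ {U V : C}, U ∈ 𝒲 → V ∈ 𝒲 → (U ⊞ V) ∈ 𝒲)
    {X Y Z : C} (f : X ⟶ Y) (g : Y ⟶ Z)
    (hses : SES f g) (hcov : CovExact 𝒲 f g) (hcon : ContraExact 𝒲 f g)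
    {WX WZ : ℕ → C} (SX : CoproperCoresolution 𝒲 X WX) (hSX : SX.IsCovExact)
    (SZ : CoproperCoresolution 𝒲 Z WZ) (hSZ : SZ.IsCovExact) :
    ∃ S : CoproperCoresolution 𝒲 Y (fun i => WX i ⊞ WZ i), S.IsCovExact := by
  obtain ⟨h1, h2, h3⟩ := stage0 𝒲 SX.hK SZ.hK f g hses hcov hcon
  let s0 : CStage 𝒲 SX SZ Y 0 := ⟨Y, eqToHom SX.hK ≫ f, g ≫ eqToHom SZ.hK.symm, h1, h2, h3⟩
  let D := cstages 𝒲 SX hSX SZ hSZ Y s0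
  let L := clink 𝒲 SX hSX SZ hSZ Y s0
  exact ⟨⟨fun i => (D i).1, rfl, fun i => (L i).1, fun i => (L i).2.1,
    fun i => hsum (SX.mem i) (SZ.mem i), fun i => (L i).2.2.1, fun i => (L i).2.2.2.2⟩,
    fun i => (L i).2.2.2.1⟩


/-- If `0→X→Y→Z→0` is both `Hom(𝒲,-)`-exact and `Hom(-,𝒲)`-exact and
`X, Z ∈ G(𝒲)`, then `Y ∈ G(𝒲)`. -/
theorem stmt_12 (𝒲 : Set C)
    (hiso : ∀ {U V : C}, (U ≅ V) → U ∈ 𝒲 → V ∈ 𝒲)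
    (hsum : ∀ {U V : C}, U ∈ 𝒲 → V ∈ 𝒲 → (U ⊞ V) ∈ 𝒲)
    {X Y Z : C} (f : X ⟶ Y) (g : Y ⟶ Z)
    (hses : SES f g) (hcov : CovExact 𝒲 f g) (hcon : ContraExact 𝒲 f g)
    (hX : MemGW 𝒲 X) (hZ : MemGW 𝒲 Z) :
    MemGW 𝒲 Y := by
  obtain ⟨⟨WXr, RX, hRX⟩, ⟨WXc, SX, hSX⟩⟩ := hX
  obtain ⟨⟨WZr, RZ, hRZ⟩, ⟨WZc, SZ, hSZ⟩⟩ := hZ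
  obtain ⟨R, hR⟩ := exists_properResolution 𝒲 (fun h1 h2 => hsum h1 h2) f g
    hses hcov hcon RX hRX RZ hRZ
  obtain ⟨S, hS⟩ := exists_coproperCoresolution 𝒲 (fun h1 h2 => hsum h1 h2) f g
    hses hcov hcon SX hSX SZ hSZ
  exact ⟨⟨_, R, hR⟩, ⟨_, S, hS⟩⟩
end
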